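/- Let V be an inner product space with a unitary action σ of a group Γ, and suppose a ∈ V satisfies: for all ε > 0 there is a finite set F ⊆ Γ with |⟨σ_s(a), a⟩| < ε for s ∉ F (mixing coefficient for a). Let (v_n) be a sequence in ℓ²(Γ) with ‖v_n‖₂ ≤ 1 and heights h(v_n) = sup_g |v_{n,g}| → 0. Then for any sequence (w_n) in ℓ²(Γ) with ‖w_n‖₂ ≤ 1, the quantity Σ_{g, g'} v_{n,g} w_{n,g⁻¹} \overline{v_{n,g'} w_{n,g'⁻¹}} ⟨σ_g(a), σ_{g'}(a)⟩ tends to 0 as n → ∞. -/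

import Mathlib

open Filter

private lemma hl_pair {ι : Type*} {f g : ι → ℝ} (hf0 : ∀ x, 0 ≤ f x) (hg0 : ∀ x, 0 ≤ g x)
    (hf : Summable fun x => f x ^ 2) (hg : Summable fun x => g x ^ 2)
    (hf1 : ∑' x, f x ^ 2 ≤ 1) (hg1 : ∑' x, g x ^ 2 ≤ 1) :
    Summable (fun x => f x * g x) ∧ ∑' x, f x * g x ≤ 1 := by
  have hb : ∀ x, f x * g x ≤ (f x ^ 2 + g x ^ 2) / 2 := by
    intro x; nlinarith [two_mul_le_add_sq (f x) (g x)]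
  have hs2 : Summable (fun x => (f x ^ 2 + g x ^ 2) / 2) := (hf.add hg).div_const 2
  have hs : Summable fun x => f x * g x :=
    Summable.of_nonneg_of_le (fun x => mul_nonneg (hf0 x) (hg0 x)) hb hs2
  refine ⟨hs, ?_⟩
  calc ∑' x, f x * g x ≤ ∑' x, (f x ^ 2 + g x ^ 2) / 2 := Summable.tsum_le_tsum hb hs hs2
    _ = ((∑' x, f x ^ 2) + ∑' x, g x ^ 2) / 2 := by rw [tsum_div_const, Summable.tsum_add hf hg]
    _ ≤ 1 := by linarith

private def mulInvEquiv {Γ : Type*} [Group Γ] (s : Γ) : Γ ≃ Γ where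
  toFun g := s * g⁻¹
  invFun g := g⁻¹ * s
  left_inv g := by simp [mul_assoc]
  right_inv g := by simp [mul_assoc]

@[simp] private lemma mulInvEquiv_apply {Γ : Type*} [Group Γ] (s g : Γ) :
    mulInvEquiv s g = s * g⁻¹ := rfl

private def diagEquiv {Γ : Type*} [Group Γ] : Γ × Γ ≃ Γ × Γ where
  toFun q := (q.2, q.2 * q.1⁻¹)
  invFun p := (p.2⁻¹ * p.1, p.1)
  left_inv q := by simp [mul_assoc]
  right_inv p := by simp [mul_assoc]

@[simp] private lemma diagEquiv_apply {Γ : Type*} [Group Γ] (q : Γ × Γ) :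
    diagEquiv q = (q.2, q.2 * q.1⁻¹) := rfl

theorem height_lemma_estimate
    {Γ : Type*} [Group Γ] [Countable Γ]
    {V : Type*} [NormedAddCommGroup V] [InnerProductSpace ℝ V]
    (σ : Γ →* (V ≃ₗᵢ[ℝ] V)) (a : V)
    (hmix : ∀ ε > (0 : ℝ), ∃ F : Finset Γ, ∀ s ∉ F, |(inner ℝ (σ s a) a : ℝ)| < ε)
    (v w : ℕ → Γ → ℂ)
    (hv_sum : ∀ n, Summable (fun g => ‖v n g‖ ^ 2))
    (hv : ∀ n, ∑' g, ‖v n g‖ ^ 2 ≤ 1)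
    (hw_sum : ∀ n, Summable (fun g => ‖w n g‖ ^ 2))
    (hw : ∀ n, ∑' g, ‖w n g‖ ^ 2 ≤ 1)
    (hheight : Tendsto (fun n => ⨆ g, ‖v n g‖) atTop (nhds 0)) :
    Tendsto (fun n => ∑' p : Γ × Γ,
        v n p.1 * w n p.1⁻¹ * (starRingEnd ℂ) (v n p.2 * w n p.2⁻¹) *
          ((inner ℝ (σ p.1 a) (σ p.2 a) : ℝ) : ℂ))
      atTop (nhds 0) := by
  classical
  -- the inner product coefficient identity
  have hc : ∀ p : Γ × Γ, (inner ℝ (σ p.1 a) (σ p.2 a) : ℝ) = (inner ℝ (σ (p.2⁻¹ * p.1) a) a : ℝ) := by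
    intro p
    have h1 : (σ (p.2⁻¹ * p.1)) a = (σ p.2⁻¹) ((σ p.1) a) := by rw [map_mul]; rfl
    have h2 : (σ p.2⁻¹) ((σ p.2) a) = a := by
      have : (σ p.2⁻¹) ((σ p.2) a) = (σ (p.2⁻¹ * p.2)) a := by rw [map_mul]; rfl
      rw [this]; simp
    rw [h1, ← h2, LinearIsometryEquiv.inner_map_map, h2]
  -- coefficient bounded by ‖a‖ ^ 2
  have hcabs : ∀ p : Γ × Γ, |(inner ℝ (σ p.1 a) (σ p.2 a) : ℝ)| ≤ ‖a‖ ^ 2 := by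
    intro p
    rw [hc p]
    calc |(inner ℝ (σ (p.2⁻¹ * p.1) a) a : ℝ)| ≤ ‖(σ (p.2⁻¹ * p.1)) a‖ * ‖a‖ :=
          abs_real_inner_le_norm _ _
      _ = ‖a‖ ^ 2 := by rw [LinearIsometryEquiv.norm_map]; ring
  rw [NormedAddCommGroup.tendsto_nhds_zero]
  intro ε hε
  obtain ⟨F, hF⟩ := hmix (ε / 2) (by positivity)
  set C : ℝ := ‖a‖ ^ 2 * F.card with hCdef
  have hC0 : (0 : ℝ) ≤ C := by positivity
  have h2 : Tendsto (fun n => C * (⨆ g, ‖v n g‖) ^ 2) atTop (nhds 0) := by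
    have := (hheight.pow 2).const_mul C
    simpa using this
  filter_upwards [h2.eventually_lt_const (by positivity : (0:ℝ) < ε / 2)] with n hn
  -- notation
  set A : Γ → ℝ := fun g => ‖v n g‖ with hAdef
  set B : Γ → ℝ := fun g => ‖w n g‖ with hBdef
  have hA0 : ∀ g, 0 ≤ A g := fun g => norm_nonneg _
  have hB0 : ∀ g, 0 ≤ B g := fun g => norm_nonneg _
  have hA2 : Summable fun g => A g ^ 2 := hv_sum n
  have hB2 : Summable fun g => B g ^ 2 := hw_sum n
  have hA21 : ∑' g, A g ^ 2 ≤ 1 := hv n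
  have hB21 : ∑' g, B g ^ 2 ≤ 1 := hw n
  set h : ℝ := ⨆ g, ‖v n g‖ with hhdef
  have hA1 : ∀ g, A g ≤ 1 := by
    intro g
    have h1 : A g ^ 2 ≤ ∑' g, A g ^ 2 := Summable.le_tsum hA2 g (fun j _ => sq_nonneg _)
    nlinarith [hA0 g]
  have hh : ∀ g, A g ≤ h := by
    intro g
    exact le_ciSup ⟨1, by rintro x ⟨g, rfl⟩; exact hA1 g⟩ g
  have hh0 : 0 ≤ h := le_trans (hA0 1) (hh 1)
  -- reindexed square sums
  have hBi2 : Summable fun g => B g⁻¹ ^ 2 := by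
    exact (Equiv.inv Γ).summable_iff.mpr hB2
  have hBi21 : ∑' g, B g⁻¹ ^ 2 ≤ 1 := by
    have := (Equiv.inv Γ).tsum_eq (fun x => B x ^ 2)
    simp only [Equiv.inv_apply] at this
    rw [this]; exact hB21
  have hBs2 : ∀ s : Γ, Summable fun g => B (s * g⁻¹) ^ 2 := by
    intro s; simpa [Function.comp_def] using (mulInvEquiv s).summable_iff.mpr hB2
  have hBs21 : ∀ s : Γ, ∑' g, B (s * g⁻¹) ^ 2 ≤ 1 := by
    intro s
    have := (mulInvEquiv s).tsum_eq (fun x => B x ^ 2)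
    simp only [mulInvEquiv_apply] at this
    rw [this]; exact hB21
  -- u and P
  set u : Γ → ℝ := fun g => A g * B g⁻¹ with hudef
  have hu := hl_pair hA0 (fun g => hB0 _) hA2 hBi2 hA21 hBi21
  have hu0 : ∀ g, 0 ≤ u g := fun g => mul_nonneg (hA0 g) (hB0 _)
  set P : Γ × Γ → ℝ := fun p => u p.1 * u p.2 with hPdef
  have hP : Summable P := hu.1.mul_of_nonneg hu.1 hu0 hu0
  have hP1 : ∑' p, P p ≤ 1 := by
    have habs : Summable fun g => ‖u g‖ := by
      simpa [Real.norm_eq_abs, abs_of_nonneg (hu0 _)] using hu.1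
    have := tsum_mul_tsum_of_summable_norm habs habs
    calc (∑' p, P p) = (∑' x, u x) * ∑' y, u y := this.symm
      _ ≤ 1 := mul_le_one₀ hu.2 (tsum_nonneg hu0) hu.2
  -- d
  set d : Γ × Γ → ℝ := fun p => if p.2⁻¹ * p.1 ∈ F then B p.1⁻¹ * B p.2⁻¹ else 0 with hddef
  have hd0 : ∀ p, 0 ≤ d p := by
    intro p; rw [hddef]; dsimp only
    split
    · exact mul_nonneg (hB0 _) (hB0 _)
    · exact le_rfl
  -- the summand and its norm
  set f : Γ × Γ → ℂ := fun p =>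
    v n p.1 * w n p.1⁻¹ * (starRingEnd ℂ) (v n p.2 * w n p.2⁻¹) *
      ((inner ℝ (σ p.1 a) (σ p.2 a) : ℝ) : ℂ) with hfdef
  have hfnorm : ∀ p : Γ × Γ, ‖f p‖ =
      A p.1 * B p.1⁻¹ * (A p.2 * B p.2⁻¹) * |(inner ℝ (σ p.1 a) (σ p.2 a) : ℝ)| := by
    intro p
    rw [hfdef]
    simp only [norm_mul, RingHomIsometric.norm_map, Complex.norm_real, Real.norm_eq_abs]; rfl
  -- d summability and sum bound
  set D' : Γ × Γ → ℝ := fun q => if q.1 ∈ F then B q.2⁻¹ * B (q.1 * q.2⁻¹) else 0 with hD'def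
  have hde : ∀ q : Γ × Γ, d (diagEquiv q) = D' q := by
    intro q
    rw [hddef, hD'def]
    dsimp only [diagEquiv_apply]
    simp [mul_assoc]
  have hD'0 : ∀ q, 0 ≤ D' q := by
    intro q; rw [hD'def]; dsimp only
    split
    · exact mul_nonneg (hB0 _) (hB0 _)
    · exact le_rfl
  have hfib : ∀ s : Γ, Summable fun g => D' (s, g) := by
    intro s
    by_cases hs : s ∈ F
    · have := (hl_pair (fun g : Γ => hB0 g⁻¹) (fun g : Γ => hB0 (s * g⁻¹)) hBi2 (hBs2 s)
        hBi21 (hBs21 s)).1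
      simpa [hD'def, hs] using this
    · simp [hD'def, hs, summable_zero]
  have hfib1 : ∀ s ∈ F, (∑' g, D' (s, g)) ≤ 1 := by
    intro s hs
    have := (hl_pair (fun g : Γ => hB0 g⁻¹) (fun g : Γ => hB0 (s * g⁻¹)) hBi2 (hBs2 s)
      hBi21 (hBs21 s)).2
    calc (∑' g, D' (s, g)) = ∑' g, B g⁻¹ * B (s * g⁻¹) := by
          apply tsum_congr; intro g; simp [hD'def, hs]
      _ ≤ 1 := this
  have hTzero : ∀ s ∉ F, (∑' g, D' (s, g)) = 0 := by
    intro s hs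
    have : ∀ g : Γ, D' (s, g) = 0 := by intro g; simp [hD'def, hs]
    simp [this]
  have hTsum : Summable fun s => ∑' g, D' (s, g) :=
    summable_of_ne_finset_zero (s := F) hTzero
  have hD'sum : Summable D' := (summable_prod_of_nonneg hD'0).mpr ⟨hfib, hTsum⟩
  have hD'1 : ∑' q, D' q ≤ (F.card : ℝ) := by
    rw [Summable.tsum_prod' hD'sum hfib]
    rw [tsum_eq_sum (s := F) hTzero]
    calc ∑ s ∈ F, ∑' g, D' (s, g) ≤ ∑ s ∈ F, (1 : ℝ) := Finset.sum_le_sum hfib1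
      _ = F.card := by simp
  have hd_sum : Summable d := by
    rw [← diagEquiv.summable_iff (f := d)]
    have : (d ∘ ⇑diagEquiv) = D' := funext hde
    rw [this]; exact hD'sum
  have hd1 : ∑' p, d p ≤ (F.card : ℝ) := by
    rw [← diagEquiv.tsum_eq d]
    calc (∑' q, d (diagEquiv q)) = ∑' q, D' q := tsum_congr hde
      _ ≤ F.card := hD'1
  -- the dominating function
  set K : ℝ := ‖a‖ ^ 2 * h ^ 2 with hKdef
  have hK0 : 0 ≤ K := by positivity
  set Bd : Γ × Γ → ℝ := fun p => ε / 2 * P p + K * d p with hBddef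
  have hBd_sum : Summable Bd := (hP.mul_left _).add (hd_sum.mul_left _)
  have hBd1 : ∑' p, Bd p ≤ ε / 2 + C * h ^ 2 := by
    rw [hBddef]
    rw [Summable.tsum_add (hP.mul_left _) (hd_sum.mul_left _), tsum_mul_left, tsum_mul_left]
    have t1 : ε / 2 * ∑' p, P p ≤ ε / 2 * 1 :=
      mul_le_mul_of_nonneg_left hP1 (by positivity)
    have t2 : K * ∑' p, d p ≤ K * F.card := mul_le_mul_of_nonneg_left hd1 hK0
    have t3 : K * (F.card : ℝ) = C * h ^ 2 := by rw [hKdef, hCdef]; ring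
    linarith
  -- pointwise bound
  have hfb : ∀ p : Γ × Γ, ‖f p‖ ≤ Bd p := by
    intro p
    rw [hfnorm p]
    have hx0 : 0 ≤ A p.1 * B p.1⁻¹ * (A p.2 * B p.2⁻¹) := by
      have := hA0 p.1; have := hA0 p.2; have := hB0 p.1⁻¹; have := hB0 p.2⁻¹; positivity
    have hPp : P p = A p.1 * B p.1⁻¹ * (A p.2 * B p.2⁻¹) := by
      rw [hPdef, hudef]
    have hP0 : 0 ≤ ε / 2 * P p := by
      rw [hPp]; positivity
    by_cases hp : p.2⁻¹ * p.1 ∈ F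
    · -- diagonal part: use the height
      have h1 : |(inner ℝ (σ p.1 a) (σ p.2 a) : ℝ)| ≤ ‖a‖ ^ 2 := hcabs p
      have hBdp : Bd p = ε / 2 * P p + K * (B p.1⁻¹ * B p.2⁻¹) := by
        rw [hBddef, hddef]; dsimp only; rw [if_pos hp]
      rw [hBdp]
      have e1 : A p.1 * B p.1⁻¹ * (A p.2 * B p.2⁻¹) ≤ h * h * (B p.1⁻¹ * B p.2⁻¹) := by
        have h12 : A p.1 * A p.2 ≤ h * h :=
          mul_le_mul (hh p.1) (hh p.2) (hA0 p.2) hh0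
        have := mul_le_mul_of_nonneg_right h12 (mul_nonneg (hB0 p.1⁻¹) (hB0 p.2⁻¹))
        calc A p.1 * B p.1⁻¹ * (A p.2 * B p.2⁻¹)
            = A p.1 * A p.2 * (B p.1⁻¹ * B p.2⁻¹) := by ring
          _ ≤ h * h * (B p.1⁻¹ * B p.2⁻¹) := this
      have e2 : A p.1 * B p.1⁻¹ * (A p.2 * B p.2⁻¹) * |(inner ℝ (σ p.1 a) (σ p.2 a) : ℝ)|
          ≤ K * (B p.1⁻¹ * B p.2⁻¹) := by
        calc A p.1 * B p.1⁻¹ * (A p.2 * B p.2⁻¹) * |(inner ℝ (σ p.1 a) (σ p.2 a) : ℝ)|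
            ≤ h * h * (B p.1⁻¹ * B p.2⁻¹) * ‖a‖ ^ 2 :=
              mul_le_mul e1 h1 (abs_nonneg _) (by positivity)
          _ = K * (B p.1⁻¹ * B p.2⁻¹) := by rw [hKdef]; ring
      linarith
    · -- off-diagonal part: small coefficient
      have h1 : |(inner ℝ (σ p.1 a) (σ p.2 a) : ℝ)| ≤ ε / 2 := by
        have := hF _ hp
        rw [hc p]; exact this.le
      have hBdp : Bd p = ε / 2 * P p + K * 0 := by
        rw [hBddef, hddef]; dsimp only; rw [if_neg hp]
      rw [hBdp]
      have : A p.1 * B p.1⁻¹ * (A p.2 * B p.2⁻¹) * |(inner ℝ (σ p.1 a) (σ p.2 a) : ℝ)|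
          ≤ ε / 2 * (A p.1 * B p.1⁻¹ * (A p.2 * B p.2⁻¹)) := by
        calc A p.1 * B p.1⁻¹ * (A p.2 * B p.2⁻¹) * |(inner ℝ (σ p.1 a) (σ p.2 a) : ℝ)|
            ≤ A p.1 * B p.1⁻¹ * (A p.2 * B p.2⁻¹) * (ε / 2) :=
              mul_le_mul_of_nonneg_left h1 hx0
          _ = ε / 2 * (A p.1 * B p.1⁻¹ * (A p.2 * B p.2⁻¹)) := by ring
      rw [hPp]
      linarith
  -- put everything together
  have hfsum_norm : Summable fun p => ‖f p‖ :=
    Summable.of_nonneg_of_le (fun p => norm_nonneg _) hfb hBd_sum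
  calc ‖∑' p, f p‖ ≤ ∑' p, ‖f p‖ := norm_tsum_le_tsum_norm hfsum_norm
    _ ≤ ∑' p, Bd p := Summable.tsum_le_tsum hfb hfsum_norm hBd_sum
    _ ≤ ε / 2 + C * h ^ 2 := hBd1
    _ < ε := by linarith
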